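/- Let m ≥ 1 be a natural number. If p and q are nonconstant polynomials with natural-number coefficients such that p · q = 1 + t^m + t^(2m) + t^(3m) + t^(4m) + t^(5m), then either {p, q} = {1 + t^m, 1 + t^(2m) + t^(4m)} or {p, q} = {1 + t^m + t^(2m), 1 + t^(3m)}. (This is the classification of factorizations over ℕ of the Z/2-Poincaré polynomial of the point space of a finite-dimensional hexagon, used in the proof that this point space does not factor as a product.) -/

import Mathlib

open Polynomial

private lemma hex_pair_le (P Q : Polynomial ℕ) {s : ℕ} (hs : s ≠ 0) :
    P.coeff s * Q.coeff 0 + P.coeff 0 * Q.coeff s ≤ (P * Q).coeff s := by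
  rw [coeff_mul]
  have hsub : ({(s, 0), (0, s)} : Finset (ℕ × ℕ)) ⊆ Finset.HasAntidiagonal.antidiagonal s := by
    intro x hx
    simp only [Finset.mem_insert, Finset.mem_singleton] at hx
    rcases hx with rfl | rfl <;> simp
  have hne : ((s, 0) : ℕ × ℕ) ≠ (0, s) := by simp [hs]
  calc P.coeff s * Q.coeff 0 + P.coeff 0 * Q.coeff s
      = ∑ x ∈ ({(s, 0), (0, s)} : Finset (ℕ × ℕ)), P.coeff x.1 * Q.coeff x.2 := by
        rw [Finset.sum_pair hne]
    _ ≤ _ := Finset.sum_le_sum_of_subset hsub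

private lemma hex_recon (P : Polynomial ℕ) (h5 : ∀ n, 5 ≤ n → P.coeff n = 0) :
    P = C (P.coeff 0) + C (P.coeff 1) * X + C (P.coeff 2) * X ^ 2 + C (P.coeff 3) * X ^ 3
        + C (P.coeff 4) * X ^ 4 := by
  ext n
  match n with
  | 0 => simp
  | 1 => simp
  | 2 => simp
  | 3 => simp
  | 4 => simp
  | (n+5) => simp [h5 (n+5) (by omega), coeff_X, coeff_one, coeff_X_pow]

private lemma hex_solve (a1 a2 a3 a4 b1 b2 b3 b4 : ℕ)
    (h1 : b1 + a1 = 1)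
    (h2 : b2 + a1*b1 + a2 = 1)
    (h3 : b3 + a1*b2 + a2*b1 + a3 = 1)
    (h4 : b4 + a1*b3 + a2*b2 + a3*b1 + a4 = 1)
    (h5 : a1*b4 + a2*b3 + a3*b2 + a4*b1 = 1)
    (h6 : a2*b4 + a3*b3 + a4*b2 = 0)
    (h7 : a3*b4 + a4*b3 = 0)
    (h8 : a4*b4 = 0)
    (ha1 : a1 ≤ 1) (ha2 : a2 ≤ 1) (ha3 : a3 ≤ 1) (ha4 : a4 ≤ 1)
    (hb1 : b1 ≤ 1) (hb2 : b2 ≤ 1) (hb3 : b3 ≤ 1) (hb4 : b4 ≤ 1) :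
    (a1=1∧a2=0∧a3=0∧a4=0∧b1=0∧b2=1∧b3=0∧b4=1) ∨
    (b1=1∧b2=0∧b3=0∧b4=0∧a1=0∧a2=1∧a3=0∧a4=1) ∨
    (a1=1∧a2=1∧a3=0∧a4=0∧b1=0∧b2=0∧b3=1∧b4=0) ∨
    (b1=1∧b2=1∧b3=0∧b4=0∧a1=0∧a2=0∧a3=1∧a4=0) := by
  interval_cases a1 <;> interval_cases a2 <;> interval_cases a3 <;> interval_cases a4 <;>
    interval_cases b1 <;> interval_cases b2 <;> interval_cases b3 <;> interval_cases b4 <;> omega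

private lemma hex_key (P Q : Polynomial ℕ) (hP : 1 ≤ P.natDegree) (hQ : 1 ≤ Q.natDegree)
    (h : P * Q = 1 + X + X ^ 2 + X ^ 3 + X ^ 4 + X ^ 5) :
    (P = 1 + X ∧ Q = 1 + X ^ 2 + X ^ 4) ∨ (P = 1 + X ^ 2 + X ^ 4 ∧ Q = 1 + X) ∨
    (P = 1 + X + X ^ 2 ∧ Q = 1 + X ^ 3) ∨ (P = 1 + X ^ 3 ∧ Q = 1 + X + X ^ 2) := by
  have hP0 : P ≠ 0 := fun e => by simp [e] at hP
  have hQ0 : Q ≠ 0 := fun e => by simp [e] at hQ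
  have hdeg : P.natDegree + Q.natDegree = 5 := by
    rw [← natDegree_mul hP0 hQ0, h]; compute_degree!
  have hp5 : ∀ n, 5 ≤ n → P.coeff n = 0 := fun n hn =>
    coeff_eq_zero_of_natDegree_lt (by omega)
  have hq5 : ∀ n, 5 ≤ n → Q.coeff n = 0 := fun n hn =>
    coeff_eq_zero_of_natDegree_lt (by omega)
  have p5 : P.coeff 5 = 0 := hp5 5 le_rfl
  have p6 : P.coeff 6 = 0 := hp5 6 (by norm_num)
  have p7 : P.coeff 7 = 0 := hp5 7 (by norm_num)
  have p8 : P.coeff 8 = 0 := hp5 8 (by norm_num)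
  have q5 : Q.coeff 5 = 0 := hq5 5 le_rfl
  have q6 : Q.coeff 6 = 0 := hq5 6 (by norm_num)
  have q7 : Q.coeff 7 = 0 := hq5 7 (by norm_num)
  have q8 : Q.coeff 8 = 0 := hq5 8 (by norm_num)
  have ec : ∀ s : ℕ, (P * Q).coeff s
      = (1 + X + X ^ 2 + X ^ 3 + X ^ 4 + X ^ 5 : Polynomial ℕ).coeff s := fun s => by rw [h]
  have e0 : P.coeff 0 * Q.coeff 0 = 1 := by
    have := ec 0
    rw [coeff_mul] at this
    simpa [Finset.Nat.sum_antidiagonal_eq_sum_range_succ_mk, Finset.sum_range_succ,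
      coeff_one, coeff_X, coeff_X_pow] using this
  have a0 : P.coeff 0 = 1 := Nat.eq_one_of_mul_eq_one_right e0
  have b0 : Q.coeff 0 = 1 := Nat.eq_one_of_mul_eq_one_left e0
  have mkeq : ∀ s : ℕ, s ≠ 0 →
      ∑ i ∈ Finset.range (s+1), P.coeff i * Q.coeff (s - i)
        = (1 + X + X ^ 2 + X ^ 3 + X ^ 4 + X ^ 5 : Polynomial ℕ).coeff s := fun s _ => by
    rw [← ec s, coeff_mul, Finset.Nat.sum_antidiagonal_eq_sum_range_succ_mk]
  have e1 : Q.coeff 1 + P.coeff 1 = 1 := by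
    have := mkeq 1 one_ne_zero
    simp [Finset.sum_range_succ, coeff_one, coeff_X, coeff_X_pow, a0, b0] at this
    linarith
  have e2 : Q.coeff 2 + P.coeff 1 * Q.coeff 1 + P.coeff 2 = 1 := by
    have := mkeq 2 two_ne_zero
    simp [Finset.sum_range_succ, coeff_one, coeff_X, coeff_X_pow, a0, b0] at this
    linarith
  have e3 : Q.coeff 3 + P.coeff 1 * Q.coeff 2 + P.coeff 2 * Q.coeff 1 + P.coeff 3 = 1 := by
    have := mkeq 3 three_ne_zero
    simp [Finset.sum_range_succ, coeff_one, coeff_X, coeff_X_pow, a0, b0] at this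
    linarith
  have e4 : Q.coeff 4 + P.coeff 1 * Q.coeff 3 + P.coeff 2 * Q.coeff 2 + P.coeff 3 * Q.coeff 1
      + P.coeff 4 = 1 := by
    have := mkeq 4 (by norm_num)
    simp [Finset.sum_range_succ, coeff_one, coeff_X, coeff_X_pow, a0, b0] at this
    linarith
  have e5 : P.coeff 1 * Q.coeff 4 + P.coeff 2 * Q.coeff 3 + P.coeff 3 * Q.coeff 2
      + P.coeff 4 * Q.coeff 1 = 1 := by
    have := mkeq 5 (by norm_num)
    simp [Finset.sum_range_succ, coeff_one, coeff_X, coeff_X_pow, a0, b0, p5, q5] at this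
    linarith
  have e6 : P.coeff 2 * Q.coeff 4 + P.coeff 3 * Q.coeff 3 + P.coeff 4 * Q.coeff 2 = 0 := by
    have := mkeq 6 (by norm_num)
    simp [Finset.sum_range_succ, coeff_one, coeff_X, coeff_X_pow, a0, b0, p5, p6, q5, q6] at this
    obtain ⟨⟨h1 | h1, h2 | h2⟩, h3 | h3⟩ := this <;> simp [h1, h2, h3]
  have e7 : P.coeff 3 * Q.coeff 4 + P.coeff 4 * Q.coeff 3 = 0 := by
    have := mkeq 7 (by norm_num)
    simp [Finset.sum_range_succ, coeff_one, coeff_X, coeff_X_pow, a0, b0, p5, p6, p7,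
      q5, q6, q7] at this
    obtain ⟨h1 | h1, h2 | h2⟩ := this <;> simp [h1, h2]
  have e8 : P.coeff 4 * Q.coeff 4 = 0 := by
    have := mkeq 8 (by norm_num)
    simp [Finset.sum_range_succ, coeff_one, coeff_X, coeff_X_pow, a0, b0, p5, p6, p7, p8,
      q5, q6, q7, q8] at this
    obtain h1 | h1 := this <;> simp [h1]
  have bnd : ∀ s : ℕ, s ≠ 0 → s ≤ 4 → P.coeff s + Q.coeff s ≤ 1 := by
    intro s hs hs4
    have h1 := hex_pair_le P Q hs
    rw [a0, b0, ec s] at h1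
    have h2 : (1 + X + X ^ 2 + X ^ 3 + X ^ 4 + X ^ 5 : Polynomial ℕ).coeff s ≤ 1 := by
      interval_cases s <;> simp [coeff_one, coeff_X, coeff_X_pow]
    simpa using le_trans h1 h2
  have hvec := hex_solve (P.coeff 1) (P.coeff 2) (P.coeff 3) (P.coeff 4)
    (Q.coeff 1) (Q.coeff 2) (Q.coeff 3) (Q.coeff 4) e1 e2 e3 e4 e5 e6 e7 e8
    (by have := bnd 1 one_ne_zero (by norm_num); omega)
    (by have := bnd 2 two_ne_zero (by norm_num); omega)
    (by have := bnd 3 three_ne_zero (by norm_num); omega)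
    (by have := bnd 4 (by norm_num) (by norm_num); omega)
    (by have := bnd 1 one_ne_zero (by norm_num); omega)
    (by have := bnd 2 two_ne_zero (by norm_num); omega)
    (by have := bnd 3 three_ne_zero (by norm_num); omega)
    (by have := bnd 4 (by norm_num) (by norm_num); omega)
  have hPr := hex_recon P hp5
  have hQr := hex_recon Q hq5
  rcases hvec with ⟨u1,u2,u3,u4,v1,v2,v3,v4⟩ | ⟨v1,v2,v3,v4,u1,u2,u3,u4⟩ |
    ⟨u1,u2,u3,u4,v1,v2,v3,v4⟩ | ⟨v1,v2,v3,v4,u1,u2,u3,u4⟩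
  · left
    constructor
    · rw [hPr, a0, u1, u2, u3, u4]; simp
    · rw [hQr, b0, v1, v2, v3, v4]; simp
  · right; left
    constructor
    · rw [hPr, a0, u1, u2, u3, u4]; simp
    · rw [hQr, b0, v1, v2, v3, v4]; simp
  · right; right; left
    constructor
    · rw [hPr, a0, u1, u2, u3, u4]; simp
    · rw [hQr, b0, v1, v2, v3, v4]; simp
  · right; right; right
    constructor
    · rw [hPr, a0, u1, u2, u3, u4]; simp
    · rw [hQr, b0, v1, v2, v3, v4]; simp

/-- For `m ≥ 1`, every factorization over `ℕ` of
`1 + t^m + t^(2m) + t^(3m) + t^(4m) + t^(5m)` into two nonconstant polynomials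
is, up to order, either `(1 + t^m)(1 + t^(2m) + t^(4m))` or
`(1 + t^m + t^(2m))(1 + t^(3m))`. -/
theorem hexagon_poincare_poly_factorizations
    (m : ℕ) (hm : 1 ≤ m)
    (p q : Polynomial ℕ)
    (hp : 1 ≤ p.degree) (hq : 1 ≤ q.degree)
    (h : p * q = 1 + X ^ m + X ^ (2 * m) + X ^ (3 * m) + X ^ (4 * m) + X ^ (5 * m)) :
    ((p = 1 + X ^ m ∧ q = 1 + X ^ (2 * m) + X ^ (4 * m)) ∨
      (p = 1 + X ^ (2 * m) + X ^ (4 * m) ∧ q = 1 + X ^ m)) ∨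
    ((p = 1 + X ^ m + X ^ (2 * m) ∧ q = 1 + X ^ (3 * m)) ∨
      (p = 1 + X ^ (3 * m) ∧ q = 1 + X ^ m + X ^ (2 * m))) := by
  have hm0 : m ≠ 0 := by omega
  have hmpos : 0 < m := hm
  have e0 : p.coeff 0 * q.coeff 0 = 1 := by
    have h0 := congrArg (fun r => r.coeff 0) h
    have n1 : (0 : ℕ) ≠ m := by omega
    have n2 : (0 : ℕ) ≠ 2 * m := by omega
    have n3 : (0 : ℕ) ≠ 3 * m := by omega
    have n4 : (0 : ℕ) ≠ 4 * m := by omega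
    have n5 : (0 : ℕ) ≠ 5 * m := by omega
    simpa [mul_coeff_zero, coeff_one, coeff_X_pow, n1, n2, n3, n4, n5] using h0
  have a0 : p.coeff 0 = 1 := Nat.eq_one_of_mul_eq_one_right e0
  have b0 : q.coeff 0 = 1 := Nat.eq_one_of_mul_eq_one_left e0
  have hsupp : ∀ k, ¬ m ∣ k → p.coeff k = 0 ∧ q.coeff k = 0 := by
    intro k hk
    have hk0 : k ≠ 0 := by rintro rfl; exact hk (dvd_zero m)
    have n1 : k ≠ m := by rintro rfl; exact hk dvd_rfl
    have n2 : k ≠ 2 * m := by rintro rfl; exact hk (dvd_mul_left m 2)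
    have n3 : k ≠ 3 * m := by rintro rfl; exact hk (dvd_mul_left m 3)
    have n4 : k ≠ 4 * m := by rintro rfl; exact hk (dvd_mul_left m 4)
    have n5 : k ≠ 5 * m := by rintro rfl; exact hk (dvd_mul_left m 5)
    have hc : (p * q).coeff k = 0 := by
      rw [h]
      simp [coeff_one, coeff_X_pow, hk0, n1, n2, n3, n4, n5]
    have hle := hex_pair_le p q hk0
    rw [hc, a0, b0] at hle
    simp at hle
    omega
  have hpe : expand ℕ m (contract m p) = p := by
    ext k
    rw [coeff_expand hmpos, coeff_contract hm0]
    split_ifs with hd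
    · rw [Nat.div_mul_cancel hd]
    · exact ((hsupp k hd).1).symm
  have hqe : expand ℕ m (contract m q) = q := by
    ext k
    rw [coeff_expand hmpos, coeff_contract hm0]
    split_ifs with hd
    · rw [Nat.div_mul_cancel hd]
    · exact ((hsupp k hd).2).symm
  have hrhs : expand ℕ m (1 + X + X ^ 2 + X ^ 3 + X ^ 4 + X ^ 5 : Polynomial ℕ)
      = 1 + X ^ m + X ^ (2 * m) + X ^ (3 * m) + X ^ (4 * m) + X ^ (5 * m) := by
    simp [map_add, map_one, map_pow, expand_X, ← pow_mul, mul_comm]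
  have hPQ : contract m p * contract m q = 1 + X + X ^ 2 + X ^ 3 + X ^ 4 + X ^ 5 := by
    apply expand_injective hmpos
    rw [map_mul, hpe, hqe, h, hrhs]
  have hdp : 1 ≤ (contract m p).natDegree := by
    have h1 : 1 ≤ p.natDegree := by
      have := natDegree_pos_iff_degree_pos.mpr (lt_of_lt_of_le (by decide) hp)
      omega
    have h2 : p.natDegree = (contract m p).natDegree * m := by
      conv_lhs => rw [← hpe]
      rw [natDegree_expand]
    by_contra hc
    have h3 : (contract m p).natDegree = 0 := by omega
    rw [h3] at h2
    omega
  have hdq : 1 ≤ (contract m q).natDegree := by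
    have h1 : 1 ≤ q.natDegree := by
      have := natDegree_pos_iff_degree_pos.mpr (lt_of_lt_of_le (by decide) hq)
      omega
    have h2 : q.natDegree = (contract m q).natDegree * m := by
      conv_lhs => rw [← hqe]
      rw [natDegree_expand]
    by_contra hc
    have h3 : (contract m q).natDegree = 0 := by omega
    rw [h3] at h2
    omega
  have E1 : expand ℕ m (1 + X : Polynomial ℕ) = 1 + X ^ m := by
    simp [map_add, map_one, expand_X]
  have E2 : expand ℕ m (1 + X ^ 2 + X ^ 4 : Polynomial ℕ)
      = 1 + X ^ (2 * m) + X ^ (4 * m) := by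
    simp [map_add, map_one, map_pow, expand_X, ← pow_mul, mul_comm]
  have E3 : expand ℕ m (1 + X + X ^ 2 : Polynomial ℕ) = 1 + X ^ m + X ^ (2 * m) := by
    simp [map_add, map_one, map_pow, expand_X, ← pow_mul, mul_comm]
  have E4 : expand ℕ m (1 + X ^ 3 : Polynomial ℕ) = 1 + X ^ (3 * m) := by
    simp [map_add, map_one, map_pow, expand_X, ← pow_mul, mul_comm]
  rcases hex_key (contract m p) (contract m q) hdp hdq hPQ with
    ⟨hcp, hcq⟩ | ⟨hcp, hcq⟩ | ⟨hcp, hcq⟩ | ⟨hcp, hcq⟩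
  · exact Or.inl (Or.inl ⟨by rw [← hpe, hcp, E1], by rw [← hqe, hcq, E2]⟩)
  · exact Or.inl (Or.inr ⟨by rw [← hpe, hcp, E2], by rw [← hqe, hcq, E1]⟩)
  · exact Or.inr (Or.inl ⟨by rw [← hpe, hcp, E3], by rw [← hqe, hcq, E4]⟩)
  · exact Or.inr (Or.inr ⟨by rw [← hpe, hcp, E4], by rw [← hqe, hcq, E3]⟩)
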